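/- Let {a_i}_{i∈ι} be an orthonormal basis of E, w ∈ E a unit vector with ⟨a_i, w⟩ ≠ 0 for every i, and B a linear operator on E with adjoint B†. Let P_w be the rank-one operator x ↦ ⟨w, x⟩ • w, let B_cl := Σ_i (⟨a_i, (B ∘ P_w − P_w ∘ B†) a_i⟩ / (2·|⟨a_i, w⟩|²)) • P_{a_i}, and let G := B ∘ P_w + P_w ∘ B† − (2·Re⟨w, B w⟩) • P_w. Then 4·(‖(B − B_cl) w‖² − |⟨w, (B − B_cl) w⟩|²) = Σ_i (Re⟨a_i, G a_i⟩)² / |⟨a_i, w⟩|². (Equivalently, δ_B A · Δ_w(B_nc) = 1/2, the exact uncertainty relation.) -/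

import Mathlib

/-- The rank-one operator `x ↦ ⟨u, x⟩ • u`. -/
noncomputable def rankOne {E : Type*} [NormedAddCommGroup E] [InnerProductSpace ℂ E]
    (u : E) : E →ₗ[ℂ] E :=
  (LinearMap.toSpanSingleton ℂ E u).comp (innerSL ℂ u).toLinearMap

/-- The classical (diagonal, anti-Hermitian) part of `B` relative to the orthonormal basis
`a` and the state vector `w`. -/
noncomputable def classicalPart {E : Type*} [NormedAddCommGroup E] [InnerProductSpace ℂ E]
    [FiniteDimensional ℂ E] {ι : Type*} [Fintype ι]
    (a : OrthonormalBasis ι ℂ E) (w : E) (B : E →ₗ[ℂ] E) : E →ₗ[ℂ] E :=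
  ∑ i, ((inner ℂ (a i) ((B ∘ₗ rankOne w - rankOne w ∘ₗ LinearMap.adjoint B) (a i)) : ℂ) /
      (2 * (‖(inner ℂ (a i) w : ℂ)‖ ^ 2 : ℂ))) • rankOne (a i)

/-- The operator `G := B P_w + P_w B† − 2 Re⟨w, B w⟩ P_w`. -/
noncomputable def Gop {E : Type*} [NormedAddCommGroup E] [InnerProductSpace ℂ E]
    [FiniteDimensional ℂ E] (w : E) (B : E →ₗ[ℂ] E) : E →ₗ[ℂ] E :=
  B ∘ₗ rankOne w + rankOne w ∘ₗ LinearMap.adjoint B -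
    (((2 * (inner ℂ w (B w) : ℂ).re : ℝ) : ℂ)) • rankOne w

lemma rankOne_apply {E : Type*} [NormedAddCommGroup E] [InnerProductSpace ℂ E]
    (u x : E) : rankOne u x = (inner ℂ u x : ℂ) • u := rfl

lemma mul_conj'' (z : ℂ) : z * (starRingEnd ℂ) z = ((‖z‖^2 : ℝ) : ℂ) := by
  rw [Complex.mul_conj]; norm_cast; rw [Complex.normSq_eq_norm_sq]

lemma inner_Gop {E : Type*} [NormedAddCommGroup E] [InnerProductSpace ℂ E]
    [FiniteDimensional ℂ E] (w : E) (B : E →ₗ[ℂ] E) (x : E) :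
    (inner ℂ x (Gop w B x) : ℂ)
      = (starRingEnd ℂ) (inner ℂ x w) * (inner ℂ x (B w)) +
        (starRingEnd ℂ) ((starRingEnd ℂ) (inner ℂ x w) * (inner ℂ x (B w)))
        - ((2 * (inner ℂ w (B w) : ℂ).re : ℝ) : ℂ) * ((starRingEnd ℂ) (inner ℂ x w) * inner ℂ x w) := by
  simp only [Gop, LinearMap.sub_apply, LinearMap.add_apply, LinearMap.comp_apply,
    LinearMap.smul_apply, rankOne_apply, map_smul, inner_smul_right,
    LinearMap.adjoint_inner_right, inner_sub_right, inner_add_right]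
  rw [← inner_conj_symm w x, ← inner_conj_symm (B w) x]
  rw [map_mul, Complex.conj_conj]
  push_cast
  ring

lemma inner_num {E : Type*} [NormedAddCommGroup E] [InnerProductSpace ℂ E]
    [FiniteDimensional ℂ E] (w : E) (B : E →ₗ[ℂ] E) (x : E) :
    (inner ℂ x ((B ∘ₗ rankOne w - rankOne w ∘ₗ LinearMap.adjoint B) x) : ℂ)
      = (starRingEnd ℂ) (inner ℂ x w) * (inner ℂ x (B w)) -
        (starRingEnd ℂ) ((starRingEnd ℂ) (inner ℂ x w) * (inner ℂ x (B w))) := by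
  simp only [LinearMap.sub_apply, LinearMap.comp_apply, rankOne_apply, map_smul,
    inner_smul_right, LinearMap.adjoint_inner_right, inner_sub_right]
  rw [← inner_conj_symm w x, ← inner_conj_symm (B w) x]
  rw [map_mul, Complex.conj_conj]
  ring

lemma inner_classicalPart {E : Type*} [NormedAddCommGroup E] [InnerProductSpace ℂ E]
    [FiniteDimensional ℂ E] {ι : Type*} [Fintype ι] (a : OrthonormalBasis ι ℂ E)
    (w : E) (B : E →ₗ[ℂ] E) (j : ι) :
    (inner ℂ (a j) (classicalPart a w B w) : ℂ)
      = (inner ℂ (a j) ((B ∘ₗ rankOne w - rankOne w ∘ₗ LinearMap.adjoint B) (a j)) : ℂ) /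
      (2 * (‖(inner ℂ (a j) w : ℂ)‖ ^ 2 : ℂ)) * inner ℂ (a j) w := by
  simp only [classicalPart, LinearMap.sum_apply, LinearMap.smul_apply, rankOne_apply,
    inner_sum, inner_smul_right, smul_eq_mul]
  classical
  rw [Finset.sum_eq_single j]
  · have h11 : (inner ℂ (a j) (a j) : ℂ) = 1 := by
      simpa using orthonormal_iff_ite.mp a.orthonormal j j
    simp [h11]
  · intro i _ hij
    have h0 : (inner ℂ (a j) (a i) : ℂ) = 0 := by
      simpa [Ne.symm hij] using orthonormal_iff_ite.mp a.orthonormal j i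
    simp [h0]
  · simp

/-- Proposition 2 (exact uncertainty relation): `δ_B A · Δ_w(B_nc) = 1/2`, in the form
`4 Δ_w(B_nc)² = Σ_i (Re⟨a_i, G a_i⟩)² / |⟨a_i, w⟩|²`. -/
theorem exact_uncertainty_relation
    {E : Type*} [NormedAddCommGroup E] [InnerProductSpace ℂ E] [FiniteDimensional ℂ E]
    {ι : Type*} [Fintype ι] (a : OrthonormalBasis ι ℂ E)
    (w : E) (hw : ‖w‖ = 1) (hne : ∀ i, (inner ℂ (a i) w : ℂ) ≠ 0)
    (B : E →ₗ[ℂ] E) :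
    4 * (‖(B - classicalPart a w B) w‖ ^ 2 -
        ‖(inner ℂ w ((B - classicalPart a w B) w) : ℂ)‖ ^ 2) =
      ∑ i, ((inner ℂ (a i) (Gop w B (a i)) : ℂ).re) ^ 2 / ‖(inner ℂ (a i) w : ℂ)‖ ^ 2 := by
  classical
  set v : E := (B - classicalPart a w B) w with hv
  set n : ι → ℝ := fun i => ‖(inner ℂ (a i) w : ℂ)‖ ^ 2 with hn
  set Ew : ℝ := (inner ℂ w (B w) : ℂ).re with hEdef
  set r : ι → ℝ := fun i => ((starRingEnd ℂ) (inner ℂ (a i) w : ℂ) * (inner ℂ (a i) (B w) : ℂ)).re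
    with hrdef
  have hn0 : ∀ i, n i ≠ 0 := fun i => pow_ne_zero _ (norm_ne_zero_iff.mpr (hne i))
  have hnC : ∀ i, ((n i : ℝ) : ℂ) ≠ 0 := fun i => by exact_mod_cast hn0 i
  have hAP : ∀ i, (inner ℂ (a i) w : ℂ) * (inner ℂ w (a i) : ℂ) = ((n i : ℝ) : ℂ) := fun i => by
    simp only [hn]
    rw [← inner_conj_symm w (a i)]
    exact mul_conj'' _
  have hPZ : ∀ i, (inner ℂ w (a i) : ℂ) * (inner ℂ (a i) (B w) : ℂ)
      + (inner ℂ (a i) w : ℂ) * (inner ℂ (B w) (a i) : ℂ) = 2 * ((r i : ℝ) : ℂ) := by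
    intro i
    simp only [hrdef]
    have h := Complex.add_conj ((starRingEnd ℂ) (inner ℂ (a i) w : ℂ) * (inner ℂ (a i) (B w) : ℂ))
    push_cast at h
    rw [← inner_conj_symm w (a i), ← inner_conj_symm (B w) (a i)]
    rw [show ((starRingEnd ℂ) (inner ℂ (a i) w : ℂ)) * (inner ℂ (a i) (B w) : ℂ)
        + (inner ℂ (a i) w : ℂ) * ((starRingEnd ℂ) (inner ℂ (a i) (B w) : ℂ))
        = (starRingEnd ℂ) (inner ℂ (a i) w : ℂ) * (inner ℂ (a i) (B w) : ℂ)
        + (starRingEnd ℂ) ((starRingEnd ℂ) (inner ℂ (a i) w : ℂ) * (inner ℂ (a i) (B w) : ℂ)) by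
      rw [map_mul, Complex.conj_conj]]
    rw [h]
  -- Parseval facts
  have hsum_r : ∑ i, r i = Ew := by
    have hpar : ∑ i, (starRingEnd ℂ) (inner ℂ (a i) w : ℂ) * (inner ℂ (a i) (B w) : ℂ)
        = (inner ℂ w (B w) : ℂ) := by
      rw [← a.sum_inner_mul_inner w (B w)]
      exact Finset.sum_congr rfl fun i _ => by rw [inner_conj_symm w (a i)]
    simp only [hrdef, hEdef]
    rw [← hpar]
    exact (Complex.re_sum _ _).symm
  have hsum_n : ∑ i, n i = 1 := by
    have h1 : ((∑ i, n i : ℝ) : ℂ) = (inner ℂ w w : ℂ) := by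
      rw [← a.sum_inner_mul_inner w w]
      push_cast
      refine Finset.sum_congr rfl fun i _ => ?_
      rw [← hAP i]
      ring
    have h2 : (inner ℂ w w : ℂ) = 1 := by
      rw [inner_self_eq_norm_sq_to_K, hw]; norm_num
    rw [h2] at h1
    exact_mod_cast h1
  -- diagonal of G
  have hG : ∀ i, (inner ℂ (a i) (Gop w B (a i)) : ℂ).re = 2 * (r i - Ew * n i) := by
    intro i
    rw [inner_Gop, Complex.add_conj]
    rw [show ((starRingEnd ℂ) (inner ℂ (a i) w : ℂ) * (inner ℂ (a i) w : ℂ))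
        = ((n i : ℝ) : ℂ) by rw [← hAP i, ← inner_conj_symm w (a i)]; ring]
    simp only [hrdef, hEdef]
    simp only [Complex.sub_re, Complex.mul_re, Complex.ofReal_re, Complex.ofReal_im,
      Complex.mul_im]
    ring
  -- the key coefficient
  have hcoef : ∀ j, (inner ℂ (a j) v : ℂ) = ((r j / n j : ℝ) : ℂ) * (inner ℂ (a j) w : ℂ) := by
    intro j
    rw [hv, LinearMap.sub_apply, inner_sub_right, inner_classicalPart, inner_num]
    rw [show (starRingEnd ℂ) ((starRingEnd ℂ) (inner ℂ (a j) w : ℂ) * (inner ℂ (a j) (B w) : ℂ))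
        = (inner ℂ (a j) w : ℂ) * (inner ℂ (B w) (a j) : ℂ) by
      rw [map_mul, Complex.conj_conj, ← inner_conj_symm (B w) (a j)]]
    rw [show ((starRingEnd ℂ) (inner ℂ (a j) w : ℂ)) = (inner ℂ w (a j) : ℂ) from
      inner_conj_symm w (a j)]
    rw [show (2 * ((‖(inner ℂ (a j) w : ℂ)‖ : ℝ) ^ 2 : ℂ)) = 2 * ((n j : ℝ) : ℂ) by
      simp only [hn]; norm_cast]
    push_cast
    field_simp [hnC j]
    linear_combination (-(2 : ℂ) * (inner ℂ (a j) (B w) : ℂ)) * hAP j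
      + ((inner ℂ (a j) w : ℂ)) * hPZ j
  -- norm of v
  have hvnorm : ‖v‖ ^ 2 = ∑ i, (r i) ^ 2 / n i := by
    have h1 : (inner ℂ v v : ℂ) = ∑ i, (((r i) ^ 2 / n i : ℝ) : ℂ) := by
      rw [← a.sum_inner_mul_inner v v]
      refine Finset.sum_congr rfl fun i _ => ?_
      have hvi' : (inner ℂ v (a i) : ℂ) = ((r i / n i : ℝ) : ℂ) * (inner ℂ w (a i) : ℂ) := by
        rw [← inner_conj_symm v (a i), hcoef i, map_mul, Complex.conj_ofReal,
          inner_conj_symm w (a i)]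
      rw [hvi', hcoef i]
      push_cast
      field_simp [hnC i]
      linear_combination ((((r i : ℝ) : ℂ)) ^ 2) * hAP i
    have h2 := inner_self_eq_norm_sq (𝕜 := ℂ) v
    rw [h1, map_sum] at h2
    rw [← h2]
    exact Finset.sum_congr rfl fun i _ => by norm_cast
  -- inner w v
  have hwv2 : ‖(inner ℂ w v : ℂ)‖ ^ 2 = Ew ^ 2 := by
    have hwv : (inner ℂ w v : ℂ) = ((Ew : ℝ) : ℂ) := by
      rw [← a.sum_inner_mul_inner w v]
      have key : ∀ i : ι, (inner ℂ w (a i) : ℂ) * inner ℂ (a i) v = ((r i : ℝ) : ℂ) := by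
        intro i
        rw [hcoef i]
        push_cast
        field_simp [hnC i]
        linear_combination (((r i : ℝ) : ℂ)) * hAP i
      rw [Finset.sum_congr rfl fun i _ => key i, ← Complex.ofReal_sum, hsum_r]
    rw [hwv, Complex.norm_real, Real.norm_eq_abs, sq_abs]
  -- RHS computation
  have hR : ∀ i, ((inner ℂ (a i) (Gop w B (a i)) : ℂ).re) ^ 2 / n i
      = 4 * ((r i) ^ 2 / n i) - 8 * Ew * r i + 4 * Ew ^ 2 * n i := by
    intro i
    rw [hG i]
    field_simp [hn0 i]
    ring
  rw [Finset.sum_congr rfl fun i _ => hR i]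
  rw [Finset.sum_add_distrib, Finset.sum_sub_distrib, ← Finset.mul_sum, ← Finset.mul_sum,
    ← Finset.mul_sum]
  rw [hsum_r, hsum_n, hvnorm, hwv2]
  ring
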